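/- Let κ be an infinite cardinal and let ⟨C_δ : δ < κ⁺⟩ be a □_κ-sequence: for each limit δ < κ⁺, C_δ is a club in δ of order type at most κ, and C_α = C_δ ∩ α whenever α is a limit point of C_δ. Then there exists a sequence ⟨f_δ : δ < κ⁺⟩ of functions f_δ : C_δ → δ such that (a) f_γ = f_δ ↾ γ whenever γ is a limit point of C_δ, and (b) f_δ is onto δ whenever otp(C_δ) = κ. -/

import Mathlib

open Cardinal

universe u

/-- The order type of a set of ordinals (one universe up). -/
noncomputable def otp (s : Set Ordinal.{u}) : Ordinal.{u + 1} :=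
  @Ordinal.type s (Subrel ((· < ·) : Ordinal.{u} → Ordinal.{u} → Prop) s)
    (inferInstanceAs (IsWellOrder s (Subrel ((· < ·) : Ordinal.{u} → Ordinal.{u} → Prop) (· ∈ s))))

/-- `C` is unbounded in (cofinal below) `x`. -/
def UnbddBelow (C : Set Ordinal.{u}) (x : Ordinal.{u}) : Prop :=
  ∀ β < x, ∃ α ∈ C, β < α ∧ α < x

/-- The set `Cₙᵗ = {α < l : t α ≤ n}`. -/
def Ct (t : Ordinal.{u} → ℕ) (l : Ordinal.{u}) (n : ℕ) : Set Ordinal.{u} :=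
  {α | α < l ∧ t α ≤ n}

/-- Membership in `𝕊_κ`: `t` has domain a successor ordinal `l < κ⁺`, each `Cₙᵗ` is
closed, at limit ordinals `t` takes the least value `n` with `Cₙᵗ` unbounded below, and
every interval disjoint from `Cₙ₋₁ᵗ` meets `Cₙᵗ` in a set of order type `< κ·ω`. -/
def InSkappa (κ : Cardinal.{u}) (l : Ordinal.{u}) (t : Ordinal.{u} → ℕ) : Prop :=
  (∃ δ, l = δ + 1) ∧ l < (Order.succ κ).ord ∧
  (∀ n : ℕ, ∀ x < l, Order.IsSuccLimit x → UnbddBelow (Ct t l n) x → t x ≤ n) ∧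
  (∀ x < l, Order.IsSuccLimit x →
    UnbddBelow (Ct t l (t x)) x ∧ ∀ m : ℕ, UnbddBelow (Ct t l m) x → t x ≤ m) ∧
  (∀ n : ℕ, ∀ I : Set Ordinal.{u}, I ⊆ Set.Iio l → I.OrdConnected →
    (∀ x ∈ I, n ≤ t x) →
    otp (Ct t l n ∩ I) < Ordinal.lift.{u + 1} (κ.ord * Ordinal.omega0))

/-- `α` is an accumulation point of `C` belonging to `C`. -/
def IsAccPt (C : Set Ordinal.{u}) (α : Ordinal.{u}) : Prop :=
  α ∈ C ∧ UnbddBelow C α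

namespace Stmt16

noncomputable def idx (D : Set Ordinal.{u}) (β : Ordinal.{u}) : Ordinal.{u+1} :=
  otp (D ∩ Set.Iio β)

theorem idx_eq (D : Set Ordinal.{u}) (β : Ordinal.{u}) (hβ : β ∈ D) :
    idx D β = Ordinal.typein (Subrel ((· < ·) : Ordinal.{u} → Ordinal.{u} → Prop) (· ∈ D)) ⟨β, hβ⟩ := by
  rw [← Ordinal.type_subrel]
  haveI : ∀ s : Set Ordinal.{u}, IsWellOrder s (Subrel ((· < ·) : Ordinal.{u} → Ordinal.{u} → Prop) s) :=
    fun s => inferInstanceAs (IsWellOrder s (Subrel ((· < ·) : Ordinal.{u} → Ordinal.{u} → Prop) (· ∈ s)))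
  exact RelIso.ordinal_type_eq
    { toFun := fun x => ⟨⟨x.1, x.2.1⟩, x.2.2⟩
      invFun := fun y => ⟨y.1.1, y.1.2, y.2⟩
      left_inv := fun x => rfl
      right_inv := fun y => rfl
      map_rel_iff' := Iff.rfl }

theorem idx_lt_otp {D : Set Ordinal.{u}} {β : Ordinal.{u}} (hβ : β ∈ D) : idx D β < otp D := by
  rw [idx_eq D β hβ]; exact Ordinal.typein_lt_type _ _

theorem idx_lt_idx {D : Set Ordinal.{u}} {γ β : Ordinal.{u}} (hγ : γ ∈ D) (hβ : β ∈ D) :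
    idx D γ < idx D β ↔ γ < β := by
  rw [idx_eq D γ hγ, idx_eq D β hβ]
  exact Ordinal.typein_lt_typein _

theorem idx_right_inj {D : Set Ordinal.{u}} {γ β : Ordinal.{u}} (hγ : γ ∈ D) (hβ : β ∈ D)
    (h : idx D γ = idx D β) : γ = β := by
  rw [idx_eq D γ hγ, idx_eq D β hβ] at h
  exact congrArg Subtype.val (Ordinal.typein_injective _ h)

theorem exists_idx (D : Set Ordinal.{u}) {i : Ordinal.{u+1}} (hi : i < otp D) :
    ∃ β ∈ D, idx D β = i := by
  let b := Ordinal.enum (Subrel ((· < ·) : Ordinal.{u} → Ordinal.{u} → Prop) (· ∈ D)) ⟨i, hi⟩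
  refine ⟨b.1, b.2, ?_⟩
  rw [idx_eq D b.1 b.2]
  exact Ordinal.typein_enum (Subrel ((· < ·) : Ordinal.{u} → Ordinal.{u} → Prop) (· ∈ D)) hi

theorem inter_trunc (D : Set Ordinal.{u}) {γ β : Ordinal.{u}} (h : β ≤ γ) :
    (D ∩ Set.Iio γ) ∩ Set.Iio β = D ∩ Set.Iio β := by
  ext x
  exact ⟨fun ⟨⟨h1, _⟩, h3⟩ => ⟨h1, h3⟩, fun ⟨h1, h3⟩ => ⟨⟨h1, lt_of_lt_of_le h3 h⟩, h3⟩⟩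

theorem idx_inter (D : Set Ordinal.{u}) {γ β : Ordinal.{u}} (h : γ ≤ β) :
    idx (D ∩ Set.Iio β) γ = idx D γ := by
  unfold idx
  rw [inter_trunc D h]

theorem exists_e (κ : Cardinal.{u}) :
    ∃ e : Ordinal.{u} → Ordinal.{u} → Ordinal.{u}, ∀ γ, γ < (Order.succ κ).ord →
      (∀ α < γ, e γ α < κ.ord) ∧ Set.InjOn (e γ) (Set.Iio γ) := by
  have h1 : ∀ γ : Ordinal.{u}, ∃ g : Ordinal.{u} → Ordinal.{u}, γ < (Order.succ κ).ord →
      (∀ α < γ, g α < κ.ord) ∧ Set.InjOn g (Set.Iio γ) := by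
    intro γ
    by_cases h : γ < (Order.succ κ).ord
    · have hcard : γ.card ≤ κ := Order.lt_succ_iff.1 (Cardinal.lt_ord.1 h)
      have hmk : #(Set.Iio γ) ≤ #(Set.Iio κ.ord) := by
        rw [Ordinal.mk_Iio_ordinal, Ordinal.mk_Iio_ordinal, Cardinal.lift_le, Cardinal.card_ord]
        exact hcard
      obtain ⟨emb⟩ := (Cardinal.le_def _ _).1 hmk
      refine ⟨fun α => if hα : α < γ then (emb ⟨α, hα⟩).1 else 0, fun _ => ⟨?_, ?_⟩⟩
      · intro α hα
        simp only [dif_pos hα]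
        exact (emb ⟨α, hα⟩).2
      · intro a ha b hb hab
        rw [Set.mem_Iio] at ha hb
        simp only [dif_pos ha, dif_pos hb] at hab
        exact congrArg Subtype.val (emb.injective (Subtype.ext hab))
    · exact ⟨fun _ => 0, fun h' => absurd h' h⟩
  choose e he using h1
  exact ⟨e, he⟩

theorem exists_pair (κ : Cardinal.{u}) (hκ : ℵ₀ ≤ κ) :
    ∃ P : Ordinal.{u+1} → Ordinal.{u+1} × Ordinal.{u+1},
      ∀ j < Ordinal.lift.{u+1} κ.ord, ∀ ξ < Ordinal.lift.{u+1} κ.ord,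
        ∃ i < Ordinal.lift.{u+1} κ.ord, ξ < i ∧ P i = (j, ξ) := by
  set c : Cardinal.{u+1} := Cardinal.lift.{u+1} κ with hc
  have hordc : Ordinal.lift.{u+1} κ.ord = c.ord := Cardinal.lift_ord κ
  have hcℵ : ℵ₀ ≤ c := by rw [hc, Cardinal.aleph0_le_lift]; exact hκ
  rw [hordc]
  have hT : #c.ord.ToType = c := Cardinal.mk_ord_toType c
  have hTT : #(c.ord.ToType × c.ord.ToType) = #c.ord.ToType := by
    simp only [Cardinal.mk_prod, Cardinal.lift_id, hT]
    exact Cardinal.mul_eq_self hcℵ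
  obtain ⟨E⟩ := Cardinal.eq.1 hTT
  let iso := Ordinal.ToType.mk (o := c.ord)
  refine ⟨fun i => if h : i < c.ord then
      ((iso.symm (E.symm (iso ⟨i, h⟩)).1).1,
       (iso.symm (E.symm (E.symm (iso ⟨i, h⟩)).2).1).1) else (0, 0), ?_⟩
  intro j hj ξ hξ
  have hz : ∃ z : c.ord.ToType, ξ < (iso.symm (E (iso ⟨j, hj⟩, E (iso ⟨ξ, hξ⟩, z)))).1 := by
    by_contra hcon
    push_neg at hcon
    have hξ1 : ξ + 1 < c.ord := by
      rw [Ordinal.add_one_eq_succ]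
      exact (Cardinal.isSuccLimit_ord hcℵ).succ_lt hξ
    have hcard1 : (ξ + 1).card < c := Cardinal.lt_ord.1 hξ1
    have hlt1 : ξ < ξ + 1 := by
      rw [Ordinal.add_one_eq_succ]; exact Order.lt_succ ξ
    let iso2 := Ordinal.ToType.mk (o := ξ + 1)
    have hinj : Function.Injective (fun z : c.ord.ToType =>
        iso2 ⟨(iso.symm (E (iso ⟨j, hj⟩, E (iso ⟨ξ, hξ⟩, z)))).1,
          lt_of_le_of_lt (hcon z) hlt1⟩) := by
      intro z1 z2 h12
      have h13 : (iso.symm (E (iso ⟨j, hj⟩, E (iso ⟨ξ, hξ⟩, z1)))).1 =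
          (iso.symm (E (iso ⟨j, hj⟩, E (iso ⟨ξ, hξ⟩, z2)))).1 :=
        Subtype.mk_eq_mk.1 (iso2.injective h12)
      have h14 := E.injective (iso.symm.injective (Subtype.ext h13))
      have h15 := E.injective (congrArg Prod.snd h14)
      exact congrArg Prod.snd h15
    have hle : #c.ord.ToType ≤ #((ξ + 1).ToType) := Cardinal.mk_le_of_injective hinj
    rw [hT, Cardinal.mk_toType] at hle
    exact absurd hle (not_le.2 hcard1)
  obtain ⟨z, hz⟩ := hz
  set x := E (iso ⟨j, hj⟩, E (iso ⟨ξ, hξ⟩, z)) with hx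
  refine ⟨(iso.symm x).1, (iso.symm x).2, hz, ?_⟩
  have h1 : iso ⟨(iso.symm x).1, (iso.symm x).2⟩ = x := iso.apply_symm_apply x
  dsimp only
  rw [dif_pos (show ((iso.symm x) : Ordinal) < c.ord from (iso.symm x).2), h1, hx]
  simp

end Stmt16

open Stmt16

/-- Rinot's lemma: from a `□_κ`-sequence `⟨C_δ : δ < κ⁺⟩` one can construct functions
`f_δ : C_δ → δ` which cohere on accumulation points and are onto `δ` whenever
`otp(C_δ) = κ`. -/

theorem stmt16 (κ : Cardinal.{u}) (hκ : ℵ₀ ≤ κ) (C : Ordinal.{u} → Set Ordinal.{u})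
    (hsq : ∀ δ < (Order.succ κ).ord, Order.IsSuccLimit δ →
      (C δ ⊆ Set.Iio δ ∧ UnbddBelow (C δ) δ ∧
        (∀ x < δ, Order.IsSuccLimit x → UnbddBelow (C δ) x → x ∈ C δ)) ∧
      otp (C δ) ≤ Ordinal.lift.{u + 1} κ.ord ∧
      (∀ α, IsAccPt (C δ) α → C α = C δ ∩ Set.Iio α)) :
    ∃ f : Ordinal.{u} → Ordinal.{u} → Ordinal.{u},
      ∀ δ < (Order.succ κ).ord, Order.IsSuccLimit δ →
        (∀ β ∈ C δ, f δ β < δ) ∧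
        (∀ γ, IsAccPt (C δ) γ → ∀ β ∈ C γ, f γ β = f δ β) ∧
        (otp (C δ) = Ordinal.lift.{u + 1} κ.ord → ∀ α < δ, ∃ β ∈ C δ, f δ β = α) := by
  classical
  obtain ⟨e, he⟩ := exists_e κ
  obtain ⟨P, hP⟩ := exists_pair κ hκ
  refine ⟨fun δ β =>
    if h : ∃ α, ∃ γ ∈ C δ ∩ Set.Iio β, α < γ ∧
        idx (C δ ∩ Set.Iio β) γ = (P (otp (C δ ∩ Set.Iio β))).2 ∧
        Ordinal.lift.{u+1} (e γ α) = (P (otp (C δ ∩ Set.Iio β))).1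
    then h.choose else 0, ?_⟩
  intro δ hδ hδlim
  obtain ⟨⟨hsub, hunb, -⟩, -, hcoh⟩ := hsq δ hδ hδlim
  refine ⟨?_, ?_, ?_⟩
  · intro β hβ
    dsimp only
    split_ifs with h
    · obtain ⟨γ, hγmem, hlt, -, -⟩ := h.choose_spec
      exact hlt.trans (hsub hγmem.1)
    · exact hδlim.bot_lt
  · intro γ hacc β hβ
    have hCγ : C γ = C δ ∩ Set.Iio γ := hcoh γ hacc
    have hβγ : β < γ := by rw [hCγ] at hβ; exact hβ.2
    dsimp only
    rw [hCγ, inter_trunc (C δ) hβγ.le]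
  · intro hotp α hα
    obtain ⟨γ, hγC, hαγ, hγδ⟩ := hunb α hα
    have hγκ : γ < (Order.succ κ).ord := hγδ.trans hδ
    have hξκ : idx (C δ) γ < Ordinal.lift.{u+1} κ.ord :=
      lt_of_lt_of_le (idx_lt_otp hγC) (le_of_eq hotp)
    have hjκ : Ordinal.lift.{u+1} (e γ α) < Ordinal.lift.{u+1} κ.ord := by
      rw [Ordinal.lift_lt]
      exact (he γ hγκ).1 α hαγ
    obtain ⟨i, hiκ, hξi, hPi⟩ := hP _ hjκ _ hξκ
    obtain ⟨β, hβC, hβidx⟩ := exists_idx (C δ) (lt_of_lt_of_le hiκ (le_of_eq hotp.symm))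
    refine ⟨β, hβC, ?_⟩
    have hγβ : γ < β := by
      rw [← idx_lt_idx hγC hβC, hβidx]; exact hξi
    have hDotp : otp (C δ ∩ Set.Iio β) = i := hβidx
    have hsnd : (P (otp (C δ ∩ Set.Iio β))).2 = idx (C δ) γ := by rw [hDotp, hPi]
    have hfst : (P (otp (C δ ∩ Set.Iio β))).1 = Ordinal.lift.{u+1} (e γ α) := by rw [hDotp, hPi]
    have hex : ∃ α', ∃ γ' ∈ C δ ∩ Set.Iio β, α' < γ' ∧
        idx (C δ ∩ Set.Iio β) γ' = (P (otp (C δ ∩ Set.Iio β))).2 ∧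
        Ordinal.lift.{u+1} (e γ' α') = (P (otp (C δ ∩ Set.Iio β))).1 := by
      refine ⟨α, γ, ⟨hγC, hγβ⟩, hαγ, ?_, ?_⟩
      · rw [hsnd, idx_inter (C δ) hγβ.le]
      · rw [hfst]
    dsimp only
    rw [dif_pos hex]
    obtain ⟨γ', hγ'mem, hα'γ', hidx', hlift'⟩ := hex.choose_spec
    have hγ'γ : γ' = γ := by
      refine idx_right_inj hγ'mem.1 hγC ?_
      rw [← idx_inter (C δ) (le_of_lt hγ'mem.2), hidx', hsnd]
    subst hγ'γ
    have heq : e γ' hex.choose = e γ' α := Ordinal.lift_inj.1 (hlift'.trans hfst)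
    exact (he γ' hγκ).2 (Set.mem_Iio.2 hα'γ') (Set.mem_Iio.2 hαγ) heq
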